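/- arXiv:2209.12337 — 8 statements merged into one kernel-verified Lean document; each statement's English description precedes it below -/
import Mathlib

section
/- For any Boolean algebra B, the twist conjunction ∧̃ on B_LETK^B, defined by (z₁,z₂,z₃) ∧̃ (w₁,w₂,w₃) = (z₁⊓w₁, z₂⊔w₂, (z₁⊓z₃⊓w₁⊓w₃) ⊔ (z₂⊓z₃) ⊔ (w₂⊓w₃)), is well-defined: the resulting triple again lies in B_LETK^B. -/
/-- The set of snapshots over a Boolean algebra `B`. -/
def BLETK (B : Type*) [BooleanAlgebra B] : Set (B × B × B) :=
  {z | z.2.2 ≤ z.1 ⊔ z.2.1 ∧ z.1 ⊓ z.2.1 ⊓ z.2.2 = ⊥}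

variable {B : Type*} [BooleanAlgebra B]

/-- Twist conjunction. -/
def tand (z w : B × B × B) : B × B × B :=
  (z.1 ⊓ w.1, z.2.1 ⊔ w.2.1,
   (z.1 ⊓ z.2.2 ⊓ w.1 ⊓ w.2.2) ⊔ (z.2.1 ⊓ z.2.2) ⊔ (w.2.1 ⊓ w.2.2))

/-- Twist disjunction. -/
def tor (z w : B × B × B) : B × B × B :=
  (z.1 ⊔ w.1, z.2.1 ⊓ w.2.1,
   (z.2.1 ⊓ z.2.2 ⊓ w.2.1 ⊓ w.2.2) ⊔ (z.1 ⊓ z.2.2) ⊔ (w.1 ⊓ w.2.2))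

/-- Twist negation. -/
def tneg (z : B × B × B) : B × B × B := (z.2.1, z.1, z.2.2)

/-- Twist classicality operator. -/
def tcirc (z : B × B × B) : B × B × B := (z.2.2, (z.2.2)ᶜ, ⊤)

/-- Twist implication. -/
def timp (z w : B × B × B) : B × B × B :=
  (z.1ᶜ ⊔ w.1, z.1 ⊓ w.2.1,
   (z.1 ⊓ w.2.1 ⊓ w.2.2) ⊔ (z.2.1 ⊓ z.2.2) ⊔ (w.1 ⊓ w.2.2))


theorem stmt1 (z w : B × B × B) (hz : z ∈ BLETK B) (hw : w ∈ BLETK B) :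
    tand z w ∈ BLETK B := by
  obtain ⟨a, b, c⟩ := z
  obtain ⟨d, e, f⟩ := w
  obtain ⟨hz1, hz2⟩ := hz
  obtain ⟨hw1, hw2⟩ := hw
  simp only [BLETK, tand, Set.mem_setOf_eq] at *
  constructor
  · refine sup_le (sup_le ?_ ?_) ?_
    · exact le_sup_of_le_left (le_inf (inf_le_of_left_le (inf_le_of_left_le inf_le_left)) (inf_le_of_left_le inf_le_right))
    · exact le_sup_of_le_right (le_sup_of_le_left inf_le_left)
    · exact le_sup_of_le_right (le_sup_of_le_right inf_le_left)
  · rw [← le_bot_iff]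
    calc a ⊓ d ⊓ (b ⊔ e) ⊓ (a ⊓ c ⊓ d ⊓ f ⊔ b ⊓ c ⊔ e ⊓ f)
        ≤ (a ⊓ b ⊓ c) ⊔ (d ⊓ e ⊓ f) := by
          rw [inf_sup_left, inf_sup_left]
          refine sup_le (sup_le ?_ ?_) ?_
          · have h : a ⊓ d ⊓ (b ⊔ e) ⊓ (a ⊓ c ⊓ d ⊓ f) ≤ (b ⊔ e) ⊓ (a ⊓ c ⊓ d ⊓ f) :=
              inf_le_inf_right _ inf_le_right
            refine h.trans ?_
            rw [inf_sup_right]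
            refine sup_le ?_ ?_
            · refine le_sup_of_le_left (le_inf (le_inf ?_ ?_) ?_)
              · exact inf_le_of_right_le (inf_le_of_left_le (inf_le_of_left_le inf_le_left))
              · exact inf_le_left
              · exact inf_le_of_right_le (inf_le_of_left_le (inf_le_of_left_le inf_le_right))
            · refine le_sup_of_le_right (le_inf (le_inf ?_ ?_) ?_)
              · exact inf_le_of_right_le (inf_le_of_left_le inf_le_right)
              · exact inf_le_left
              · exact inf_le_of_right_le inf_le_right
          · refine le_sup_of_le_left (le_inf (le_inf ?_ ?_) ?_)
            · exact inf_le_of_left_le (inf_le_of_left_le inf_le_left)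
            · exact inf_le_of_right_le inf_le_left
            · exact inf_le_of_right_le inf_le_right
          · refine le_sup_of_le_right (le_inf (le_inf ?_ ?_) ?_)
            · exact inf_le_of_left_le (inf_le_of_left_le inf_le_right)
            · exact inf_le_of_right_le inf_le_left
            · exact inf_le_of_right_le inf_le_right
      _ = ⊥ := by rw [hz2, hw2, sup_idem]
end

section
/- For any Boolean algebra B, the twist disjunction ∨̃ on B_LETK^B, defined by (z₁,z₂,z₃) ∨̃ (w₁,w₂,w₃) = (z₁⊔w₁, z₂⊓w₂, (z₂⊓z₃⊓w₂⊓w₃) ⊔ (z₁⊓z₃) ⊔ (w₁⊓w₃)), is well-defined: the resulting triple again lies in B_LETK^B. -/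
variable {B : Type*} [BooleanAlgebra B]

theorem stmt2 (z w : B × B × B) (hz : z ∈ BLETK B) (hw : w ∈ BLETK B) :
    tor z w ∈ BLETK B := by
  obtain ⟨a, b, c⟩ := z
  obtain ⟨d, e, f⟩ := w
  obtain ⟨hz1, hz2⟩ := hz
  obtain ⟨hw1, hw2⟩ := hw
  simp only [BLETK, tor, Set.mem_setOf_eq] at *
  constructor
  · refine sup_le (sup_le ?_ ?_) ?_
    · exact le_sup_of_le_right (le_inf (inf_le_left.trans (inf_le_left.trans inf_le_left)) (inf_le_left.trans inf_le_right))
    · exact le_sup_of_le_left (le_sup_of_le_left inf_le_left)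
    · exact le_sup_of_le_left (le_sup_of_le_right inf_le_left)
  · rw [eq_bot_iff]
    rw [inf_sup_left, inf_sup_left]
    refine sup_le (sup_le ?_ ?_) ?_
    · calc (a ⊔ d) ⊓ (b ⊓ e) ⊓ (b ⊓ c ⊓ e ⊓ f)
          ≤ (a ⊓ b ⊓ c) ⊔ (d ⊓ e ⊓ f) := by
            rw [inf_sup_right, inf_sup_right]
            refine sup_le ?_ ?_
            · exact le_sup_of_le_left (le_inf (le_inf (inf_le_left.trans inf_le_left)
                (inf_le_right.trans (inf_le_left.trans (inf_le_left.trans inf_le_left))))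
                (inf_le_right.trans (inf_le_left.trans (inf_le_left.trans inf_le_right))))
            · exact le_sup_of_le_right (le_inf (le_inf (inf_le_left.trans inf_le_left)
                (inf_le_right.trans (inf_le_left.trans inf_le_right))) (inf_le_right.trans inf_le_right))
        _ ≤ ⊥ := by rw [hz2, hw2]; simp
    · calc (a ⊔ d) ⊓ (b ⊓ e) ⊓ (a ⊓ c)
          ≤ a ⊓ b ⊓ c := le_inf (le_inf (inf_le_right.trans inf_le_left)
            ((inf_le_left.trans inf_le_right).trans inf_le_left)) (inf_le_right.trans inf_le_right)
        _ ≤ ⊥ := hz2.le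
    · calc (a ⊔ d) ⊓ (b ⊓ e) ⊓ (d ⊓ f)
          ≤ d ⊓ e ⊓ f := le_inf (le_inf (inf_le_right.trans inf_le_left)
            ((inf_le_left.trans inf_le_right).trans inf_le_right)) (inf_le_right.trans inf_le_right)
        _ ≤ ⊥ := hw2.le
end

section
/- For any Boolean algebra B, the twist operations satisfy the absorption laws on B_LETK^B: z ∨̃ (z ∧̃ w) = z and z ∧̃ (z ∨̃ w) = z for all z, w ∈ B_LETK^B. -/
variable {B : Type*} [BooleanAlgebra B]

private lemma key_absorb (a b c d e f : B) (h1 : c ≤ a ⊔ b) (h3 : d ⊓ e ⊓ f = ⊥) :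
    (b ⊓ c ⊓ (b ⊔ e) ⊓ ((a ⊓ c ⊓ d ⊓ f) ⊔ (b ⊓ c) ⊔ (e ⊓ f))) ⊔ (a ⊓ c) ⊔
      ((a ⊓ d) ⊓ ((a ⊓ c ⊓ d ⊓ f) ⊔ (b ⊓ c) ⊔ (e ⊓ f))) = c := by
  apply le_antisymm
  · refine sup_le (sup_le ?_ inf_le_right) ?_
    · exact inf_le_left.trans (inf_le_left.trans inf_le_right)
    · rw [inf_sup_left, inf_sup_left]
      refine sup_le (sup_le ?_ ?_) ?_
      · exact inf_le_right.trans ((inf_le_left.trans inf_le_left).trans inf_le_right)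
      · exact inf_le_right.trans inf_le_right
      · have : a ⊓ d ⊓ (e ⊓ f) ≤ d ⊓ e ⊓ f :=
          le_inf (le_inf (inf_le_left.trans inf_le_right)
            (inf_le_right.trans inf_le_left)) (inf_le_right.trans inf_le_right)
        exact this.trans (h3.le.trans bot_le)
  · have hc : c ≤ (c ⊓ a) ⊔ (c ⊓ b) := by
      rw [← inf_sup_left]; exact le_inf le_rfl h1
    refine hc.trans (sup_le ?_ ?_)
    · exact (inf_comm c a).le.trans (le_sup_right.trans le_sup_left)
    · refine le_trans ?_ (le_sup_left.trans le_sup_left)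
      refine le_inf (le_inf (le_inf inf_le_right inf_le_left)
        (inf_le_right.trans le_sup_left)) ?_
      exact ((inf_comm c b).le).trans (le_sup_right.trans le_sup_left)


theorem stmt6 (z w : B × B × B) (hz : z ∈ BLETK B) (hw : w ∈ BLETK B) :
    tor z (tand z w) = z ∧ tand z (tor z w) = z := by
  obtain ⟨a, b, c⟩ := z
  obtain ⟨d, e, f⟩ := w
  simp only [BLETK, Set.mem_setOf_eq] at hz hw
  constructor
  · simp only [tand, tor]
    refine Prod.ext ?_ (Prod.ext ?_ ?_)
    · exact sup_inf_self
    · exact inf_sup_self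
    · exact key_absorb a b c d e f hz.1 hw.2
  · simp only [tand, tor]
    refine Prod.ext ?_ (Prod.ext ?_ ?_)
    · exact inf_sup_self
    · exact sup_inf_self
    · have h1' : c ≤ b ⊔ a := hz.1.trans (sup_comm a b).le
      have h3' : e ⊓ d ⊓ f = ⊥ := by rw [inf_comm e d]; exact hw.2
      exact key_absorb b a c e d f h1' h3'
end

section
/- For any Boolean algebra B, the structure (B_LETK^B, ∧̃, ∨̃) is a bounded lattice with top element T = (1,0,1) and bottom element F = (0,1,1): in particular z ∧̃ T = z and z ∨̃ F = z for all z ∈ B_LETK^B. -/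
variable {B : Type*} [BooleanAlgebra B]

open Order in
lemma bprop_le {a b : B}
    (h : ∀ f : B → Bool,
      (∀ x y : B, f (x ⊓ y) = (f x && f y)) →
      (∀ x y : B, f (x ⊔ y) = (f x || f y)) →
      (f ⊥ = false) → (f ⊤ = true) →
      (∀ x y : B, x ≤ y → f x = true → f y = true) →
      f a = true → f b = true) : a ≤ b := by
  by_contra hab
  have hdisj : Disjoint ((PFilter.principal a : PFilter B) : Set B)
      ((Order.Ideal.principal b : Order.Ideal B) : Set B) := by
    rw [Set.disjoint_left]
    intro x hx hx'
    exact hab (le_trans (PFilter.mem_principal.mp hx) (Ideal.mem_principal.mp hx'))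
  obtain ⟨J, hJp, hIJ, hdis⟩ := DistribLattice.prime_ideal_of_disjoint_filter_ideal hdisj
  have hbJ : b ∈ J := hIJ Ideal.mem_principal_self
  have haJ : a ∉ J := fun h' => Set.disjoint_left.mp hdis (PFilter.mem_principal.mpr le_rfl) h'
  classical
  have key := h (fun x => decide (x ∉ J))
    (fun x y => by
      show decide (x ⊓ y ∉ J) = (decide (x ∉ J) && decide (y ∉ J))
      rw [← Bool.decide_and, decide_eq_decide]
      exact ⟨fun hxy => ⟨fun hx => hxy (J.lower inf_le_left hx),
          fun hy => hxy (J.lower inf_le_right hy)⟩,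
        fun hxy h2 => (hJp.mem_or_mem h2).elim hxy.1 hxy.2⟩)
    (fun x y => by
      show decide (x ⊔ y ∉ J) = (decide (x ∉ J) || decide (y ∉ J))
      rw [← Bool.decide_or, decide_eq_decide]
      exact ⟨fun hxy => by
          by_contra hc
          push_neg at hc
          exact hxy (Ideal.sup_mem hc.1 hc.2),
        fun hxy h2 => hxy.elim (fun hx => hx (J.lower le_sup_left h2))
          (fun hy => hy (J.lower le_sup_right h2))⟩)
    (by simp [J.bot_mem]) (by simp [hJp.toIsProper.top_notMem])
    (fun x y hxy => by
      simp only [decide_eq_true_eq]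
      exact fun hx hyJ => hx (J.lower hxy hyJ))
  simp only [decide_eq_true_eq] at key
  exact (key haJ) hbJ

lemma bprop_eq {a b : B}
    (h : ∀ f : B → Bool,
      (∀ x y : B, f (x ⊓ y) = (f x && f y)) →
      (∀ x y : B, f (x ⊔ y) = (f x || f y)) →
      (f ⊥ = false) → (f ⊤ = true) →
      (∀ x y : B, x ≤ y → f x = true → f y = true) →
      f a = f b) : a = b :=
  le_antisymm
    (bprop_le fun f hi hs hb ht hm ha => (h f hi hs hb ht hm) ▸ ha)
    (bprop_le fun f hi hs hb ht hm ha => (h f hi hs hb ht hm) ▸ ha)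

lemma bmem_imp {z : B × B × B} (hz : z ∈ BLETK B) (f : B → Bool)
    (hs : ∀ x y : B, f (x ⊔ y) = (f x || f y))
    (hm : ∀ x y : B, x ≤ y → f x = true → f y = true) :
    f z.2.2 = true → (f z.1 || f z.2.1) = true := fun h =>
  (hs z.1 z.2.1) ▸ (hm _ _ hz.1 h)

lemma bmem_bot {z : B × B × B} (hz : z ∈ BLETK B) (f : B → Bool)
    (hi : ∀ x y : B, f (x ⊓ y) = (f x && f y))
    (hb : f ⊥ = false) :
    ((f z.1 && f z.2.1) && f z.2.2) = false := by
  have := congrArg f hz.2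
  rwa [hi, hi, hb] at this

theorem stmt7 :
    -- the top and bottom elements are snapshots
    ((⊤, ⊥, ⊤) : B × B × B) ∈ BLETK B ∧ ((⊥, ⊤, ⊤) : B × B × B) ∈ BLETK B ∧
    -- closure under the lattice operations
    (∀ z ∈ BLETK B, ∀ w ∈ BLETK B, tand z w ∈ BLETK B ∧ tor z w ∈ BLETK B) ∧
    -- idempotence
    (∀ z ∈ BLETK B, tand z z = z ∧ tor z z = z) ∧
    -- commutativity
    (∀ z ∈ BLETK B, ∀ w ∈ BLETK B, tand z w = tand w z ∧ tor z w = tor w z) ∧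
    -- associativity
    (∀ z ∈ BLETK B, ∀ w ∈ BLETK B, ∀ u ∈ BLETK B,
      tand z (tand w u) = tand (tand z w) u ∧ tor z (tor w u) = tor (tor z w) u) ∧
    -- absorption
    (∀ z ∈ BLETK B, ∀ w ∈ BLETK B, tor z (tand z w) = z ∧ tand z (tor z w) = z) ∧
    -- bounds: T = (1,0,1) is the top and F = (0,1,1) is the bottom
    (∀ z ∈ BLETK B, tand z ((⊤, ⊥, ⊤) : B × B × B) = z ∧
      tor z ((⊥, ⊤, ⊤) : B × B × B) = z) := by
  refine ⟨⟨by simp [BLETK], by simp [BLETK]⟩, ⟨by simp [BLETK], by simp [BLETK]⟩,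
    ?_, ?_, ?_, ?_, ?_, ?_⟩
  · intro z hz w hw
    constructor <;>
    · simp only [BLETK, Set.mem_setOf_eq, tand, tor]
      refine ⟨bprop_le ?_, bprop_eq ?_⟩ <;>
      · intro f hi hs hb ht hm
        have Hz1 := bmem_imp hz f hs hm
        have Hz2 := bmem_bot hz f hi hb
        have Hw1 := bmem_imp hw f hs hm
        have Hw2 := bmem_bot hw f hi hb
        simp only [hi, hs, hb, ht]
        revert Hz1 Hz2 Hw1 Hw2
        generalize f z.1 = a01
        generalize f z.2.1 = a02
        generalize f z.2.2 = a03
        generalize f w.1 = a11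
        generalize f w.2.1 = a12
        generalize f w.2.2 = a13
        revert a01 a02 a03 a11 a12 a13
        decide
  · intro z hz
    constructor <;>
    · simp only [tand, tor, Prod.ext_iff]
      refine ⟨bprop_eq ?_, bprop_eq ?_, bprop_eq ?_⟩ <;>
      · intro f hi hs hb ht hm
        have Hz1 := bmem_imp hz f hs hm
        have Hz2 := bmem_bot hz f hi hb
        simp only [hi, hs, hb, ht]
        revert Hz1 Hz2
        generalize f z.1 = a01
        generalize f z.2.1 = a02
        generalize f z.2.2 = a03
        revert a01 a02 a03
        decide
  · intro z hz w hw
    constructor <;>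
    · simp only [tand, tor, Prod.ext_iff]
      refine ⟨bprop_eq ?_, bprop_eq ?_, bprop_eq ?_⟩ <;>
      · intro f hi hs hb ht hm
        have Hz1 := bmem_imp hz f hs hm
        have Hz2 := bmem_bot hz f hi hb
        have Hw1 := bmem_imp hw f hs hm
        have Hw2 := bmem_bot hw f hi hb
        simp only [hi, hs, hb, ht]
        revert Hz1 Hz2 Hw1 Hw2
        generalize f z.1 = a01
        generalize f z.2.1 = a02
        generalize f z.2.2 = a03
        generalize f w.1 = a11
        generalize f w.2.1 = a12
        generalize f w.2.2 = a13
        revert a01 a02 a03 a11 a12 a13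
        decide
  · intro z hz w hw u hu
    constructor <;>
    · simp only [tand, tor, Prod.ext_iff]
      refine ⟨bprop_eq ?_, bprop_eq ?_, bprop_eq ?_⟩ <;>
      · intro f hi hs hb ht hm
        have Hz1 := bmem_imp hz f hs hm
        have Hz2 := bmem_bot hz f hi hb
        have Hw1 := bmem_imp hw f hs hm
        have Hw2 := bmem_bot hw f hi hb
        have Hu1 := bmem_imp hu f hs hm
        have Hu2 := bmem_bot hu f hi hb
        simp only [hi, hs, hb, ht]
        revert Hz1 Hz2 Hw1 Hw2 Hu1 Hu2
        generalize f z.1 = a01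
        generalize f z.2.1 = a02
        generalize f z.2.2 = a03
        generalize f w.1 = a11
        generalize f w.2.1 = a12
        generalize f w.2.2 = a13
        generalize f u.1 = a21
        generalize f u.2.1 = a22
        generalize f u.2.2 = a23
        revert a01 a02 a03 a11 a12 a13 a21 a22 a23
        decide
  · intro z hz w hw
    constructor <;>
    · simp only [tand, tor, Prod.ext_iff]
      refine ⟨bprop_eq ?_, bprop_eq ?_, bprop_eq ?_⟩ <;>
      · intro f hi hs hb ht hm
        have Hz1 := bmem_imp hz f hs hm
        have Hz2 := bmem_bot hz f hi hb
        have Hw1 := bmem_imp hw f hs hm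
        have Hw2 := bmem_bot hw f hi hb
        simp only [hi, hs, hb, ht]
        revert Hz1 Hz2 Hw1 Hw2
        generalize f z.1 = a01
        generalize f z.2.1 = a02
        generalize f z.2.2 = a03
        generalize f w.1 = a11
        generalize f w.2.1 = a12
        generalize f w.2.2 = a13
        revert a01 a02 a03 a11 a12 a13
        decide
  · intro z hz
    constructor <;>
    · simp only [tand, tor, Prod.ext_iff]
      refine ⟨bprop_eq ?_, bprop_eq ?_, bprop_eq ?_⟩ <;>
      · intro f hi hs hb ht hm
        have Hz1 := bmem_imp hz f hs hm
        have Hz2 := bmem_bot hz f hi hb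
        simp only [hi, hs, hb, ht]
        revert Hz1 Hz2
        generalize f z.1 = a01
        generalize f z.2.1 = a02
        generalize f z.2.2 = a03
        revert a01 a02 a03
        decide
end

section
/- In the lattice B_LETK^B (with lattice order defined by z ≤ w iff z = z ∧̃ w), one has z ≤ w if and only if z₁ ≤ w₁, z₂ ≥ w₂, z₂ ⊓ z₃ ≥ w₂ ⊓ w₃, and z₃ ≤ (z₁ ⊓ w₃) ⊔ z₂. -/
variable {B : Type*} [BooleanAlgebra B]

theorem stmt8 (z w : B × B × B) (hz : z ∈ BLETK B) (hw : w ∈ BLETK B) :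
    tand z w = z ↔
      (z.1 ≤ w.1 ∧ w.2.1 ≤ z.2.1 ∧ w.2.1 ⊓ w.2.2 ≤ z.2.1 ⊓ z.2.2 ∧
        z.2.2 ≤ (z.1 ⊓ w.2.2) ⊔ z.2.1) := by
  obtain ⟨a, b, c⟩ := z
  obtain ⟨d, e, f⟩ := w
  simp only [tand, Prod.mk.injEq, inf_eq_left, sup_eq_left]
  constructor
  · rintro ⟨h1, h2, h3⟩
    refine ⟨h1, h2, ?_, ?_⟩
    · have hef : e ⊓ f ≤ c := h3 ▸ le_sup_right
      exact le_inf (inf_le_left.trans h2) hef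
    · calc c = (a ⊓ c ⊓ d ⊓ f) ⊔ (b ⊓ c) ⊔ (e ⊓ f) := h3.symm
        _ ≤ (a ⊓ f) ⊔ b := by
          apply sup_le (sup_le ?_ ?_) ?_
          · exact le_sup_left.trans' (le_inf (inf_le_left.trans (inf_le_left.trans inf_le_left)) inf_le_right)
          · exact inf_le_left.trans le_sup_right
          · exact (inf_le_left.trans h2).trans le_sup_right
  · rintro ⟨h1, h2, h3, h4⟩
    refine ⟨h1, h2, le_antisymm ?_ ?_⟩
    · exact sup_le (sup_le (inf_le_left.trans (inf_le_left.trans inf_le_right)) inf_le_right)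
        (h3.trans inf_le_right)
    · have hc : c ≤ c ⊓ (a ⊓ f) ⊔ c ⊓ b := by
        rw [← inf_sup_left]; exact le_inf le_rfl h4
      refine hc.trans (sup_le ?_ ?_)
      · refine le_sup_left.trans' (le_sup_left.trans' ?_)
        exact le_inf (le_inf (le_inf (inf_le_right.trans inf_le_left) inf_le_left)
          ((inf_le_right.trans inf_le_left).trans h1)) (inf_le_right.trans inf_le_right)
      · exact le_sup_left.trans' (le_sup_right.trans' (by rw [inf_comm]))
end

section
/- In the six-valued matrix M₆, the equivalence connective defined by z ≡̃ w = (z ↔̃ w) ∧̃ (¬̃z ↔̃ ¬̃w) ∧̃ (∘̃z ↔̃ ∘̃w) satisfies: (z ≡̃ w) is designated (i.e., has first coordinate 1) if and only if z = w, for all z, w in the six-element domain. -/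
variable {B : Type*} [BooleanAlgebra B]

/-- The six truth-values over the two-element Boolean algebra `Bool`. -/
def vT : Bool × Bool × Bool := (true, false, true)
def vT0 : Bool × Bool × Bool := (true, false, false)
def vb : Bool × Bool × Bool := (true, true, false)
def vn : Bool × Bool × Bool := (false, false, false)
def vF0 : Bool × Bool × Bool := (false, true, false)
def vF : Bool × Bool × Bool := (false, true, true)


/-- Twist bi-implication. -/
def tiff (z w : Bool × Bool × Bool) : Bool × Bool × Bool :=
  tand (timp z w) (timp w z)

/-- The equivalence connective of `LET_K+`. -/
def tequiv (z w : Bool × Bool × Bool) : Bool × Bool × Bool :=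
  tand (tand (tiff z w) (tiff (tneg z) (tneg w))) (tiff (tcirc z) (tcirc w))


theorem stmt10 (z w : Bool × Bool × Bool) (hz : z ∈ BLETK Bool)
    (hw : w ∈ BLETK Bool) :
    (tequiv z w).1 = true ↔ z = w := by
  obtain ⟨a, b, c⟩ := z
  obtain ⟨d, e, f⟩ := w
  simp only [BLETK, Set.mem_setOf_eq] at hz hw
  revert hz hw a b c d e f
  decide
end

section
/- The six-valued lattice L6 (order T ≥ T₀ ≥ each of {n, b} ≥ F₀ ≥ F, with n and b incomparable) is a lattice whose meet and join coincide with the twist operations ∧̃ and ∨̃ of M₆ restricted to the six elements, and its restriction to {T₀, b, n, F₀} is (order-isomorphic to) Belnap's logical lattice L4. -/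
variable {B : Type*} [BooleanAlgebra B]

/-- Level of a truth-value in the lattice L6 (n and b share a level). -/
def lvl (z : Bool × Bool × Bool) : ℕ :=
  if z = vF then 0 else if z = vF0 then 1
  else if z = vT0 then 3 else if z = vT then 4 else 2

/-- The order of the lattice L6: `F ≤ F₀ ≤ n, b ≤ T₀ ≤ T`, with `n`, `b`
incomparable. -/
def le6 (z w : Bool × Bool × Bool) : Prop := z = w ∨ lvl z < lvl w

theorem stmt14 :
    -- `∧̃` is the meet of L6
    (∀ z ∈ BLETK Bool, ∀ w ∈ BLETK Bool,
      le6 (tand z w) z ∧ le6 (tand z w) w ∧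
        ∀ u ∈ BLETK Bool, le6 u z → le6 u w → le6 u (tand z w)) ∧
    -- `∨̃` is the join of L6
    (∀ z ∈ BLETK Bool, ∀ w ∈ BLETK Bool,
      le6 z (tor z w) ∧ le6 w (tor z w) ∧
        ∀ u ∈ BLETK Bool, le6 z u → le6 w u → le6 (tor z w) u) ∧
    -- the restriction of L6 to {T₀, b, n, F₀} is Belnap's lattice L4
    (∀ z ∈ ({vT0, vb, vn, vF0} : Set (Bool × Bool × Bool)),
      ∀ w ∈ ({vT0, vb, vn, vF0} : Set (Bool × Bool × Bool)),
        (le6 z w ↔ (z = w ∨ z = vF0 ∨ w = vT0))) := by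
  simp only [BLETK, Set.mem_setOf_eq, Set.mem_insert_iff, Set.mem_singleton_iff, le6]
  refine ⟨?_, ?_, ?_⟩
  · rintro ⟨z1, z2, z3⟩ hz ⟨w1, w2, w3⟩ hw
    refine ⟨?_, ?_, ?_⟩
    · revert hz hw
      cases z1 <;> cases z2 <;> cases z3 <;> cases w1 <;> cases w2 <;> cases w3 <;> decide
    · revert hz hw
      cases z1 <;> cases z2 <;> cases z3 <;> cases w1 <;> cases w2 <;> cases w3 <;> decide
    · rintro ⟨u1, u2, u3⟩ hu h1 h2
      revert hz hw hu h1 h2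
      cases z1 <;> cases z2 <;> cases z3 <;> cases w1 <;> cases w2 <;> cases w3 <;>
        cases u1 <;> cases u2 <;> cases u3 <;> decide
  · rintro ⟨z1, z2, z3⟩ hz ⟨w1, w2, w3⟩ hw
    refine ⟨?_, ?_, ?_⟩
    · revert hz hw
      cases z1 <;> cases z2 <;> cases z3 <;> cases w1 <;> cases w2 <;> cases w3 <;> decide
    · revert hz hw
      cases z1 <;> cases z2 <;> cases z3 <;> cases w1 <;> cases w2 <;> cases w3 <;> decide
    · rintro ⟨u1, u2, u3⟩ hu h1 h2
      revert hz hw hu h1 h2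
      cases z1 <;> cases z2 <;> cases z3 <;> cases w1 <;> cases w2 <;> cases w3 <;>
        cases u1 <;> cases u2 <;> cases u3 <;> decide
  · rintro z (rfl | rfl | rfl | rfl) w (rfl | rfl | rfl | rfl) <;> decide
end

section
/- In the six-valued matrix M₆, the formula ¬(A → B) semantically entails A: for every valuation v over M₆, if v(¬(A→B)) is designated then v(A) is designated. However, in the degree-preserving sense this fails: there exist z, w in the six-element domain with ¬̃(z →̃ w) not ≤ z in the lattice order of A₆ (e.g. z = b, w = n, where ¬̃(b →̃ n) = n ⊄ b). -/
variable {B : Type*} [BooleanAlgebra B]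

/-- Propositional formulas over the signature of `LET_K`. -/
inductive Fm where
  | var : ℕ → Fm
  | and : Fm → Fm → Fm
  | or : Fm → Fm → Fm
  | imp : Fm → Fm → Fm
  | neg : Fm → Fm
  | circ : Fm → Fm


theorem stmt18 :
    -- ¬(A → B) semantically entails A in the matrix M₆
    (∀ v : Fm → Bool × Bool × Bool,
      (∀ A, v A ∈ BLETK Bool) →
      (∀ A B, v (Fm.and A B) = tand (v A) (v B)) →
      (∀ A B, v (Fm.or A B) = tor (v A) (v B)) →
      (∀ A B, v (Fm.imp A B) = timp (v A) (v B)) →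
      (∀ A, v (Fm.neg A) = tneg (v A)) →
      (∀ A, v (Fm.circ A) = tcirc (v A)) →
      ∀ A B, (v (Fm.neg (Fm.imp A B))).1 = true → (v A).1 = true) ∧
    -- but degree-preservation fails: ¬̃(z →̃ w) ≰ z for some z, w
    (∃ z ∈ BLETK Bool, ∃ w ∈ BLETK Bool,
      ¬ tand (tneg (timp z w)) z = tneg (timp z w)) ∧
    -- e.g. z = b, w = n, where ¬̃(b →̃ n) = n ⊄ b
    (tneg (timp vb vn) = vn ∧ ¬ tand (tneg (timp vb vn)) vb = tneg (timp vb vn)) := by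
  refine ⟨?_, ?_, ?_⟩
  · intro v _ _ _ himp hneg _ A B h
    rw [hneg, himp] at h
    simp [tneg, timp] at h
    exact h.1
  · refine ⟨vb, ⟨by decide, by decide⟩, vn, ⟨by decide, by decide⟩, by decide⟩
  · exact ⟨by decide, by decide⟩
end
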